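/- Let A > 0, ε > 0, N > 0. (a) With J = (ε + 2AN)/(9A), the triple (J1, J3, Θ) = (J, J, 0) solves the Chow–Kim critical-point system, and 0 < J < N/2 holds if and only if N > 2ε/(5A). (b) With J = (2AN − ε)/(7A), the triple (J1, J3, Θ) = (J, J, π) solves the Chow–Kim critical-point system whenever J ≥ 0, and J > 0 holds if and only if N > ε/(2A). -/
import Mathlib


/-- The Chow–Kim critical-point system in the variables `(J₁, J₃, Θ)`. -/
def CKsystem (A ε N J1 J3 Θ : ℝ) : Prop :=
  Real.sqrt (J1 * J3) * (2 * ε - A * (J1 + J3))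
      + 2 * A * (N * (J1 + J3) - J1 ^ 2 - 6 * J1 * J3 - J3 ^ 2) * Real.cos Θ = 0 ∧
  Real.sqrt (J1 * J3) * (N - J1 - J3) * Real.sin Θ = 0

lemma sqrt_sq_self {J : ℝ} (hJ : 0 ≤ J) : Real.sqrt (J * J) = J := by
  rw [Real.sqrt_mul_self hJ]

/-- (a) `(J, J, 0)` with `J = (ε+2AN)/(9A)` solves the Chow–Kim system, and
`0 < J < N/2` iff `N > 2ε/(5A)`; (b) `(J, J, π)` with `J = (2AN−ε)/(7A)` solves
the system whenever `J ≥ 0`, and `J > 0` iff `N > ε/(2A)`. -/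
theorem CK_symmetric_solutions (A ε N : ℝ) (hA : 0 < A) (hε : 0 < ε) (hN : 0 < N) :
    (CKsystem A ε N ((ε + 2 * A * N) / (9 * A)) ((ε + 2 * A * N) / (9 * A)) 0 ∧
      ((0 < (ε + 2 * A * N) / (9 * A) ∧ (ε + 2 * A * N) / (9 * A) < N / 2)
        ↔ N > 2 * ε / (5 * A))) ∧
    ((0 ≤ (2 * A * N - ε) / (7 * A) →
        CKsystem A ε N ((2 * A * N - ε) / (7 * A)) ((2 * A * N - ε) / (7 * A)) Real.pi) ∧
      (0 < (2 * A * N - ε) / (7 * A) ↔ N > ε / (2 * A))) := by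
  have hA' : A ≠ 0 := ne_of_gt hA
  constructor
  · constructor
    · have hJ : 0 ≤ (ε + 2 * A * N) / (9 * A) := by positivity
      constructor
      · rw [sqrt_sq_self hJ, Real.cos_zero]
        field_simp
        ring
      · simp [Real.sin_zero]
    · constructor
      · rintro ⟨h1, h2⟩
        rw [gt_iff_lt, div_lt_iff₀ (by positivity)]
        rw [div_lt_iff₀ (by positivity)] at h2
        nlinarith
      · intro h
        rw [gt_iff_lt, div_lt_iff₀ (by positivity)] at h
        constructor
        · positivity
        · rw [div_lt_iff₀ (by positivity)]
          nlinarith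
  · constructor
    · intro hJ
      constructor
      · rw [sqrt_sq_self hJ, Real.cos_pi]
        field_simp
        ring
      · simp [Real.sin_pi]
    · rw [div_pos_iff, gt_iff_lt, div_lt_iff₀ (by positivity)]
      constructor
      · rintro (⟨h1, _⟩ | ⟨_, h2⟩)
        · nlinarith
        · nlinarith
      · intro h
        left
        constructor <;> nlinarith
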